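/- Let ∑ x_n be a conditionally convergent series in ℝ² with two non-collinear Levy vectors u and v. Then for every x ∈ span⁺(u,v) = {au + bv : a,b > 0} there exists a set E ⊆ ℕ of indices such that ∑_{n∈E} ‖x_n‖ < ∞ and ∑_{n∈E} x_n = x. That is, span⁺(u,v) ⊆ A_abs(x_n). -/

import Mathlib

open Filter Topology

/-- Euclidean norm on the plane `ℝ × ℝ`. -/
noncomputable def enorm2 (v : ℝ × ℝ) : ℝ := Real.sqrt (v.1 ^ 2 + v.2 ^ 2)

/-- Euclidean inner product on the plane. -/
def dot2 (u v : ℝ × ℝ) : ℝ := u.1 * v.1 + u.2 * v.2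

/-- `u` is a Levy vector of the series `∑ x n`: `u` is a unit vector and for every `ε > 0`
the sum of norms of the terms lying in the cone `S_ε(u)` diverges. -/
noncomputable def IsLevy (x : ℕ → ℝ × ℝ) (u : ℝ × ℝ) : Prop :=
  enorm2 u = 1 ∧ ∀ ε : ℝ, 0 < ε → ¬ Summable (fun n =>
    if (1 - ε) * enorm2 u * enorm2 (x n) ≤ dot2 u (x n) then enorm2 (x n) else 0)

/-- The series `∑ x n` converges (in the given order) to `s`. -/
def ConvergesTo (x : ℕ → ℝ × ℝ) (s : ℝ × ℝ) : Prop :=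
  Tendsto (fun N => ∑ n ∈ Finset.range N, x n) atTop (𝓝 s)

/-- The series `∑ x n` is conditionally convergent. -/
noncomputable def CondConv (x : ℕ → ℝ × ℝ) : Prop :=
  (∃ s, ConvergesTo x s) ∧ ¬ Summable (fun n => enorm2 (x n))

/-- `s` belongs to the achievement set `A(x)`. -/
def Achieves (x : ℕ → ℝ × ℝ) (s : ℝ × ℝ) : Prop :=
  ∃ E : Set ℕ, ConvergesTo (Set.indicator E x) s

/-- `s` belongs to the absolute achievement set `A_abs(x)`. -/
noncomputable def AchievesAbs (x : ℕ → ℝ × ℝ) (s : ℝ × ℝ) : Prop :=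
  ∃ E : Set ℕ, Summable (fun n => enorm2 (Set.indicator E x n)) ∧
    HasSum (Set.indicator E x) s

/-- The reduction property of a series `∑ (x n, y n)`. -/
noncomputable def ReductionProperty (x y : ℕ → ℝ) : Prop :=
  Tendsto (fun n => |y n| / |x n|) atTop atTop ∧
  ∀ ε : ℝ, 0 < ε → ∀ t ∈ Set.Ioo (-ε) ε, ∀ N : ℕ,
    ∃ m : ℕ, ∃ k : ℕ → ℕ, 0 < m ∧ StrictMono k ∧ N ≤ k 0 ∧
      |(∑ i ∈ Finset.range m, x (k i)) - t| < ε / 2 ∧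
      ∀ j : ℕ, 1 ≤ j → j ≤ m →
        |∑ i ∈ Finset.range j, x (k i)| < ε ∧ |∑ i ∈ Finset.range j, y (k i)| < ε

lemma enorm2_nonneg (w : ℝ × ℝ) : 0 ≤ enorm2 w := Real.sqrt_nonneg _

lemma enorm2_zero : enorm2 (0 : ℝ × ℝ) = 0 := by simp [enorm2]

lemma enorm2_sq (w : ℝ × ℝ) : enorm2 w ^ 2 = w.1 ^ 2 + w.2 ^ 2 := by
  rw [enorm2, Real.sq_sqrt]; positivity

lemma abs_dot2_le (p q : ℝ × ℝ) : |dot2 p q| ≤ enorm2 p * enorm2 q := by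
  have h1 : dot2 p q ^ 2 ≤ (p.1 ^ 2 + p.2 ^ 2) * (q.1 ^ 2 + q.2 ^ 2) := by
    have := sq_nonneg (p.1 * q.2 - p.2 * q.1)
    simp only [dot2]; nlinarith
  have h2 : (enorm2 p * enorm2 q) ^ 2 = (p.1 ^ 2 + p.2 ^ 2) * (q.1 ^ 2 + q.2 ^ 2) := by
    rw [mul_pow, enorm2_sq, enorm2_sq]
  have h3 := abs_le_of_sq_le_sq' (h2 ▸ h1) (mul_nonneg (enorm2_nonneg p) (enorm2_nonneg q))
  exact abs_le.mpr h3

lemma enorm2_add_le (p q : ℝ × ℝ) : enorm2 (p + q) ≤ enorm2 p + enorm2 q := by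
  have h := abs_dot2_le p q
  have hp := enorm2_nonneg p
  have hq := enorm2_nonneg q
  have key : enorm2 (p + q) ^ 2 ≤ (enorm2 p + enorm2 q) ^ 2 := by
    rw [enorm2_sq]
    have : dot2 p q ≤ enorm2 p * enorm2 q := (abs_le.mp h).2
    simp only [Prod.fst_add, Prod.snd_add, dot2] at *
    nlinarith [enorm2_sq p, enorm2_sq q]
  nlinarith [enorm2_nonneg (p + q)]

lemma enorm2_smul (c : ℝ) (w : ℝ × ℝ) : enorm2 (c • w) = |c| * enorm2 w := by
  simp only [enorm2, Prod.smul_fst, Prod.smul_snd, smul_eq_mul, mul_pow]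
  rw [← mul_add, Real.sqrt_mul (sq_nonneg c), Real.sqrt_sq_eq_abs]

lemma norm_le_enorm2 (w : ℝ × ℝ) : ‖w‖ ≤ enorm2 w := by
  rw [Prod.norm_def]
  apply max_le
  · rw [Real.norm_eq_abs, ← Real.sqrt_sq_eq_abs]
    exact Real.sqrt_le_sqrt (by nlinarith [sq_nonneg w.2])
  · rw [Real.norm_eq_abs, ← Real.sqrt_sq_eq_abs]
    exact Real.sqrt_le_sqrt (by nlinarith [sq_nonneg w.1])

lemma enorm2_le_two_norm (w : ℝ × ℝ) : enorm2 w ≤ 2 * ‖w‖ := by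
  have h1 : enorm2 w ≤ |w.1| + |w.2| := by
    rw [enorm2]
    rw [show w.1 ^ 2 + w.2 ^ 2 = |w.1| ^ 2 + |w.2| ^ 2 by simp [sq_abs]]
    calc Real.sqrt (|w.1| ^ 2 + |w.2| ^ 2) ≤ Real.sqrt ((|w.1| + |w.2|) ^ 2) :=
          Real.sqrt_le_sqrt (by nlinarith [abs_nonneg w.1, abs_nonneg w.2])
      _ = |w.1| + |w.2| := Real.sqrt_sq (by positivity)
  have h2 : |w.1| ≤ ‖w‖ := by
    rw [Prod.norm_def]; exact le_max_of_le_left (le_of_eq (Real.norm_eq_abs _).symm)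
  have h3 : |w.2| ≤ ‖w‖ := by
    rw [Prod.norm_def]; exact le_max_of_le_right (le_of_eq (Real.norm_eq_abs _).symm)
  linarith

lemma enorm2_sum_le {ι : Type*} (G : Finset ι) (f : ι → ℝ × ℝ) :
    enorm2 (∑ i ∈ G, f i) ≤ ∑ i ∈ G, enorm2 (f i) := by
  classical
  induction G using Finset.induction_on with
  | empty => simp [enorm2_zero]
  | insert _ _ h ih =>
    rw [Finset.sum_insert h, Finset.sum_insert h]
    exact (enorm2_add_le _ _).trans (by linarith)

/-- Per-term cone geometry: if `w` lies in the `η²/2`-cone around unit `u`,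
then `w` is within `η‖w‖` of `‖w‖ • u`. -/
lemma cone_approx {u w : ℝ × ℝ} {η : ℝ} (hη : 0 ≤ η) (hu : enorm2 u = 1)
    (hc : (1 - η ^ 2 / 2) * enorm2 w ≤ dot2 u w) :
    enorm2 (w - enorm2 w • u) ≤ η * enorm2 w := by
  have ht := enorm2_nonneg w
  have key : enorm2 (w - enorm2 w • u) ^ 2 ≤ (η * enorm2 w) ^ 2 := by
    rw [enorm2_sq]
    have hu2 : u.1 ^ 2 + u.2 ^ 2 = 1 := by
      have := enorm2_sq u; rw [hu] at this; linarith
    have hw2 := enorm2_sq w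
    simp only [Prod.fst_sub, Prod.snd_sub, Prod.smul_fst, Prod.smul_snd, smul_eq_mul, dot2] at *
    nlinarith [enorm2_nonneg w]
  have h2 := abs_le_of_sq_le_sq' key (by positivity)
  calc enorm2 (w - enorm2 w • u) = |enorm2 (w - enorm2 w • u)| :=
        (abs_of_nonneg (enorm2_nonneg _)).symm
    _ ≤ η * enorm2 w := abs_le.mpr h2

lemma batch_approx {u : ℝ × ℝ} {η : ℝ} (hη : 0 ≤ η) (hu : enorm2 u = 1)
    (G : Finset ℕ) (f : ℕ → ℝ × ℝ)
    (hc : ∀ n ∈ G, (1 - η ^ 2 / 2) * enorm2 (f n) ≤ dot2 u (f n)) :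
    enorm2 ((∑ n ∈ G, f n) - (∑ n ∈ G, enorm2 (f n)) • u)
      ≤ η * ∑ n ∈ G, enorm2 (f n) := by
  have h1 : (∑ n ∈ G, f n) - (∑ n ∈ G, enorm2 (f n)) • u
      = ∑ n ∈ G, (f n - enorm2 (f n) • u) := by
    rw [Finset.sum_sub_distrib, Finset.sum_smul]
  rw [h1, Finset.mul_sum]
  exact (enorm2_sum_le _ _).trans
    (Finset.sum_le_sum fun n hn => cone_approx hη hu (hc n hn))

noncomputable def det2 (u v : ℝ × ℝ) : ℝ := u.1 * v.2 - u.2 * v.1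
noncomputable def coordA (u v w : ℝ × ℝ) : ℝ := (w.1 * v.2 - w.2 * v.1) / det2 u v
noncomputable def coordB (u v w : ℝ × ℝ) : ℝ := (u.1 * w.2 - u.2 * w.1) / det2 u v

lemma enorm2_ne_zero_of_one {u : ℝ × ℝ} (hu : enorm2 u = 1) : u ≠ 0 := by
  intro h; rw [h, enorm2_zero] at hu; norm_num at hu

lemma det2_ne_zero {u v : ℝ × ℝ} (hu : enorm2 u = 1) (hnc : ∀ c : ℝ, v ≠ c • u) :
    det2 u v ≠ 0 := by
  intro hd
  have hu0 := enorm2_ne_zero_of_one hu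
  rcases eq_or_ne u.1 0 with h1 | h1
  · have h2 : u.2 ≠ 0 := by
      intro h2; exact hu0 (Prod.ext h1 h2)
    apply hnc (v.2 / u.2)
    have : v.1 = 0 := by
      simp only [det2, h1] at hd
      have : u.2 * v.1 = 0 := by linarith
      rcases mul_eq_zero.mp this with h | h
      · exact absurd h h2
      · exact h
    apply Prod.ext <;> simp [this, h1, h2]
  · apply hnc (v.1 / u.1)
    apply Prod.ext
    · simp [h1]
    · simp only [det2] at hd
      simp only [Prod.smul_snd, smul_eq_mul]
      field_simp
      nlinarith [hd]

section Coord
variable {u v : ℝ × ℝ}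

lemma coordA_u (hd : det2 u v ≠ 0) : coordA u v u = 1 := by
  simp only [coordA, det2] at *; field_simp
lemma coordA_v : coordA u v v = 0 := by
  have : v.1 * v.2 - v.2 * v.1 = 0 := by ring
  simp [coordA, this]
lemma coordB_u : coordB u v u = 0 := by
  have : u.1 * u.2 - u.2 * u.1 = 0 := by ring
  simp [coordB, this]
lemma coordB_v (hd : det2 u v ≠ 0) : coordB u v v = 1 := by
  simp only [coordB, det2] at *; field_simp; try ring

lemma coordA_add (p q : ℝ × ℝ) : coordA u v (p + q) = coordA u v p + coordA u v q := by
  simp only [coordA, Prod.fst_add, Prod.snd_add]; ring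
lemma coordB_add (p q : ℝ × ℝ) : coordB u v (p + q) = coordB u v p + coordB u v q := by
  simp only [coordB, Prod.fst_add, Prod.snd_add]; ring
lemma coordA_sub (p q : ℝ × ℝ) : coordA u v (p - q) = coordA u v p - coordA u v q := by
  simp only [coordA, Prod.fst_sub, Prod.snd_sub]; ring
lemma coordB_sub (p q : ℝ × ℝ) : coordB u v (p - q) = coordB u v p - coordB u v q := by
  simp only [coordB, Prod.fst_sub, Prod.snd_sub]; ring
lemma coordA_smul (c : ℝ) (p : ℝ × ℝ) : coordA u v (c • p) = c * coordA u v p := by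
  simp only [coordA, Prod.smul_fst, Prod.smul_snd, smul_eq_mul]; ring
lemma coordB_smul (c : ℝ) (p : ℝ × ℝ) : coordB u v (c • p) = c * coordB u v p := by
  simp only [coordB, Prod.smul_fst, Prod.smul_snd, smul_eq_mul]; ring

lemma coord_repr (hd : det2 u v ≠ 0) (w : ℝ × ℝ) :
    coordA u v w • u + coordB u v w • v = w := by
  apply Prod.ext <;>
  · simp only [Prod.fst_add, Prod.snd_add, Prod.smul_fst, Prod.smul_snd, smul_eq_mul,
      coordA, coordB]
    field_simp
    simp only [det2]
    try ring

lemma abs_coordA_le (hd : det2 u v ≠ 0) (hv : enorm2 v = 1) (w : ℝ × ℝ) :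
    |coordA u v w| ≤ enorm2 w / |det2 u v| := by
  have h : w.1 * v.2 - w.2 * v.1 = dot2 w (v.2, -v.1) := by simp [dot2]; ring
  have h2 : enorm2 ((v.2, -v.1) : ℝ × ℝ) = 1 := by
    rw [← hv]; simp [enorm2]; ring_nf
  have := abs_dot2_le w (v.2, -v.1)
  rw [h2, mul_one] at this
  rw [coordA, abs_div, h]
  have hdp : 0 < |det2 u v| := abs_pos.mpr hd
  gcongr

lemma abs_coordB_le (hd : det2 u v ≠ 0) (hu : enorm2 u = 1) (w : ℝ × ℝ) :
    |coordB u v w| ≤ enorm2 w / |det2 u v| := by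
  have h : u.1 * w.2 - u.2 * w.1 = dot2 w (-u.2, u.1) := by simp [dot2]; ring
  have h2 : enorm2 ((-u.2, u.1) : ℝ × ℝ) = 1 := by
    rw [← hu]; simp [enorm2]; ring_nf
  have := abs_dot2_le w (-u.2, u.1)
  rw [h2, mul_one] at this
  rw [coordB, abs_div, h]
  have hdp : 0 < |det2 u v| := abs_pos.mpr hd
  gcongr
end Coord

lemma coordA_sum {u v : ℝ × ℝ} (G : Finset ℕ) (f : ℕ → ℝ × ℝ) :
    coordA u v (∑ n ∈ G, f n) = ∑ n ∈ G, coordA u v (f n) := by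
  classical
  induction G using Finset.induction_on with
  | empty => simp [coordA]
  | insert _ _ h ih => rw [Finset.sum_insert h, Finset.sum_insert h, coordA_add, ih]

lemma coordB_sum {u v : ℝ × ℝ} (G : Finset ℕ) (f : ℕ → ℝ × ℝ) :
    coordB u v (∑ n ∈ G, f n) = ∑ n ∈ G, coordB u v (f n) := by
  classical
  induction G using Finset.induction_on with
  | empty => simp [coordB]
  | insert _ _ h ih => rw [Finset.sum_insert h, Finset.sum_insert h, coordB_add, ih]

lemma enorm2_le_coords {u v : ℝ × ℝ} (hd : det2 u v ≠ 0) (hu : enorm2 u = 1)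
    (hv : enorm2 v = 1) (w : ℝ × ℝ) :
    enorm2 w ≤ |coordA u v w| + |coordB u v w| := by
  conv_lhs => rw [← coord_repr hd w]
  calc enorm2 (coordA u v w • u + coordB u v w • v)
      ≤ enorm2 (coordA u v w • u) + enorm2 (coordB u v w • v) := enorm2_add_le _ _
    _ = |coordA u v w| + |coordB u v w| := by rw [enorm2_smul, enorm2_smul, hu, hv]; ring

/-- Terms of a convergent series tend to zero. -/
lemma terms_tendsto_zero {x : ℕ → ℝ × ℝ} {s : ℝ × ℝ}
    (h : Tendsto (fun N => ∑ n ∈ Finset.range N, x n) atTop (𝓝 s)) :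
    Tendsto x atTop (𝓝 0) := by
  have h2 : Tendsto (fun N => ∑ n ∈ Finset.range (N + 1), x n) atTop (𝓝 s) :=
    h.comp (tendsto_add_atTop_nat 1)
  have h3 := h2.sub h
  simp only [Finset.sum_range_succ, add_sub_cancel_left, sub_self] at h3
  exact h3

/-- Batch extraction: from a divergent cone, pick a finite batch with norm-sum in `[δ/2, δ]`,
all indices `≥ N`. -/
lemma batch_exists {x : ℕ → ℝ × ℝ} {u : ℝ × ℝ} (hu1 : enorm2 u = 1)
    (hL : ∀ ε : ℝ, 0 < ε → ¬ Summable (fun n =>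
      if (1 - ε) * enorm2 u * enorm2 (x n) ≤ dot2 u (x n) then enorm2 (x n) else 0))
    (h0 : Tendsto x atTop (𝓝 0)) {ε δ : ℝ} (hε : 0 < ε) (hδ : 0 < δ) (N : ℕ) :
    ∃ G : Finset ℕ, (∀ n ∈ G, N ≤ n) ∧
      (∀ n ∈ G, (1 - ε) * enorm2 (x n) ≤ dot2 u (x n)) ∧
      δ / 2 ≤ ∑ n ∈ G, enorm2 (x n) ∧ (∑ n ∈ G, enorm2 (x n)) ≤ δ := by
  classical
  -- find N₀ past which terms are small
  have hsmall : ∀ᶠ n in atTop, ‖x n‖ < δ / 4 :=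
    (NormedAddCommGroup.tendsto_nhds_zero.mp h0) (δ / 4) (by positivity)
  obtain ⟨N₁, hN₁⟩ := eventually_atTop.mp hsmall
  set N₀ := max N N₁ with hN₀
  have hsm : ∀ n, N₀ ≤ n → enorm2 (x n) ≤ δ / 2 := by
    intro n hn
    have := hN₁ n (le_trans (le_max_right _ _) hn)
    calc enorm2 (x n) ≤ 2 * ‖x n‖ := enorm2_le_two_norm _
      _ ≤ δ / 2 := by linarith
  set f : ℕ → ℝ := fun n =>
    if N₀ ≤ n ∧ (1 - ε) * enorm2 u * enorm2 (x n) ≤ dot2 u (x n)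
    then enorm2 (x n) else 0 with hf
  have hfnn : ∀ n, 0 ≤ f n := by
    intro n; rw [hf]; dsimp only
    split <;> first | exact enorm2_nonneg _ | exact le_refl 0
  have hfns : ¬ Summable f := by
    intro hs
    apply hL ε hε
    set g : ℕ → ℝ := fun n =>
      if (1 - ε) * enorm2 u * enorm2 (x n) ≤ dot2 u (x n) then enorm2 (x n) else 0 with hg
    have hdiff : Summable (fun n => g n - f n) := by
      apply summable_of_ne_finset_zero (s := Finset.range N₀)
      intro n hn
      have hn' : N₀ ≤ n := by
        by_contra hc
        exact hn (Finset.mem_range.mpr (not_le.mp hc))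
      simp only [hg, hf]
      by_cases hcone : (1 - ε) * enorm2 u * enorm2 (x n) ≤ dot2 u (x n) <;>
        simp [hcone, hn']
    have := hs.add hdiff
    exact this.congr (fun n => by ring)
  have hdiv := (not_summable_iff_tendsto_nat_atTop_of_nonneg hfnn).mp hfns
  obtain ⟨M, hM⟩ := (hdiv.eventually_ge_atTop (δ / 2)).exists
  have hex : ∃ M, δ / 2 ≤ ∑ n ∈ Finset.range M, f n := ⟨M, hM⟩
  set M₀ := Nat.find hex with hM₀def
  have hM₀ : δ / 2 ≤ ∑ n ∈ Finset.range M₀, f n := Nat.find_spec hex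
  have hM₀pos : M₀ ≠ 0 := by
    intro h
    rw [h] at hM₀; simp at hM₀; linarith
  obtain ⟨M₁, hM₁⟩ := Nat.exists_eq_succ_of_ne_zero hM₀pos
  have hlt : ¬ δ / 2 ≤ ∑ n ∈ Finset.range M₁, f n :=
    Nat.find_min hex (by omega)
  have hub : ∑ n ∈ Finset.range M₀, f n ≤ δ := by
    rw [hM₁, Finset.sum_range_succ]
    have hfM₁ : f M₁ ≤ δ / 2 := by
      rw [hf]; dsimp only
      split
      · exact hsm M₁ (by tauto)
      · linarith
    push_neg at hlt
    linarith
  refine ⟨(Finset.range M₀).filter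
    (fun n => N₀ ≤ n ∧ (1 - ε) * enorm2 u * enorm2 (x n) ≤ dot2 u (x n)), ?_, ?_, ?_, ?_⟩
  · intro n hn
    have := (Finset.mem_filter.mp hn).2.1
    exact le_trans (le_max_left _ _) this
  · intro n hn
    have := (Finset.mem_filter.mp hn).2.2
    rwa [hu1, mul_one] at this
  · rw [Finset.sum_filter]; exact hM₀
  · rw [Finset.sum_filter]; exact hub

/-- One stage of the construction: a fresh batch of indices `≥ N` whose sum removes a
definite fraction of both coordinates, with controlled norm. -/
lemma step_exists {x : ℕ → ℝ × ℝ} {u v : ℝ × ℝ}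
    (hu1 : enorm2 u = 1) (hv1 : enorm2 v = 1) (hd : det2 u v ≠ 0)
    (hLu : ∀ ε : ℝ, 0 < ε → ¬ Summable (fun n =>
      if (1 - ε) * enorm2 u * enorm2 (x n) ≤ dot2 u (x n) then enorm2 (x n) else 0))
    (hLv : ∀ ε : ℝ, 0 < ε → ¬ Summable (fun n =>
      if (1 - ε) * enorm2 v * enorm2 (x n) ≤ dot2 v (x n) then enorm2 (x n) else 0))
    (h0 : Tendsto x atTop (𝓝 0))
    (N : ℕ) {a' b' : ℝ} (ha : 0 < a') (hb : 0 < b') :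
    ∃ G : Finset ℕ, (∀ n ∈ G, N ≤ n) ∧
      a' / 8 ≤ coordA u v (∑ n ∈ G, x n) ∧ coordA u v (∑ n ∈ G, x n) ≤ 5 / 8 * a' ∧
      b' / 8 ≤ coordB u v (∑ n ∈ G, x n) ∧ coordB u v (∑ n ∈ G, x n) ≤ 5 / 8 * b' ∧
      (∑ n ∈ G, enorm2 (x n)) ≤ (a' + b') / 2 := by
  classical
  have hdp : (0:ℝ) < |det2 u v| := abs_pos.mpr hd
  set K : ℝ := 1 / |det2 u v| with hK
  have hKpos : 0 < K := by positivity
  set m := min a' b' with hm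
  have hmpos : 0 < m := lt_min ha hb
  set η : ℝ := m / (4 * K * (a' + b')) with hη
  have hηpos : 0 < η := by
    apply div_pos hmpos; positivity
  set ε : ℝ := η ^ 2 / 2 with hε
  have hεpos : 0 < ε := by positivity
  -- first batch in the u-cone
  obtain ⟨G₁, hG₁N, hG₁cone, hG₁lo, hG₁hi⟩ :=
    batch_exists hu1 hLu h0 hεpos (half_pos ha) N
  set N₂ := max N (G₁.sup id + 1) with hN₂
  obtain ⟨G₂, hG₂N, hG₂cone, hG₂lo, hG₂hi⟩ :=
    batch_exists hv1 hLv h0 hεpos (half_pos hb) N₂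
  have hdisj : Disjoint G₁ G₂ := by
    rw [Finset.disjoint_left]
    intro n hn1 hn2
    have h1 : n ≤ G₁.sup id := Finset.le_sup (f := id) hn1
    have h2 : N₂ ≤ n := hG₂N n hn2
    omega
  set t_u := ∑ n ∈ G₁, enorm2 (x n) with htu
  set t_v := ∑ n ∈ G₂, enorm2 (x n) with htv
  have htu_lo : a' / 2 / 2 ≤ t_u := hG₁lo
  have htv_lo : b' / 2 / 2 ≤ t_v := hG₂lo
  have htu_nn : 0 ≤ t_u := le_trans (by linarith) htu_lo
  have htv_nn : 0 ≤ t_v := le_trans (by linarith) htv_lo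
  set s₁ := ∑ n ∈ G₁, x n with hs₁
  set s₂ := ∑ n ∈ G₂, x n with hs₂
  have happrox₁ : enorm2 (s₁ - t_u • u) ≤ η * t_u := by
    apply batch_approx hηpos.le hu1
    intro n hn
    exact hG₁cone n hn
  have happrox₂ : enorm2 (s₂ - t_v • v) ≤ η * t_v := by
    apply batch_approx hηpos.le hv1
    intro n hn
    exact hG₂cone n hn
  -- coordinate errors
  have hA₁ : |coordA u v s₁ - t_u| ≤ K * (η * t_u) := by
    have h1 : coordA u v s₁ - t_u = coordA u v (s₁ - t_u • u) := by
      rw [coordA_sub, coordA_smul, coordA_u hd, mul_one]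
    rw [h1, hK]
    calc |coordA u v (s₁ - t_u • u)| ≤ enorm2 (s₁ - t_u • u) / |det2 u v| :=
          abs_coordA_le hd hv1 _
      _ ≤ (η * t_u) / |det2 u v| := by gcongr
      _ = 1 / |det2 u v| * (η * t_u) := by ring
  have hA₂ : |coordA u v s₂| ≤ K * (η * t_v) := by
    have h1 : coordA u v s₂ = coordA u v (s₂ - t_v • v) := by
      rw [coordA_sub, coordA_smul, coordA_v, mul_zero, sub_zero]
    rw [h1, hK]
    calc |coordA u v (s₂ - t_v • v)| ≤ enorm2 (s₂ - t_v • v) / |det2 u v| :=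
          abs_coordA_le hd hv1 _
      _ ≤ (η * t_v) / |det2 u v| := by gcongr
      _ = 1 / |det2 u v| * (η * t_v) := by ring
  have hB₂ : |coordB u v s₂ - t_v| ≤ K * (η * t_v) := by
    have h1 : coordB u v s₂ - t_v = coordB u v (s₂ - t_v • v) := by
      rw [coordB_sub, coordB_smul, coordB_v hd, mul_one]
    rw [h1, hK]
    calc |coordB u v (s₂ - t_v • v)| ≤ enorm2 (s₂ - t_v • v) / |det2 u v| :=
          abs_coordB_le hd hu1 _
      _ ≤ (η * t_v) / |det2 u v| := by gcongr
      _ = 1 / |det2 u v| * (η * t_v) := by ring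
  have hB₁ : |coordB u v s₁| ≤ K * (η * t_u) := by
    have h1 : coordB u v s₁ = coordB u v (s₁ - t_u • u) := by
      rw [coordB_sub, coordB_smul, coordB_u, mul_zero, sub_zero]
    rw [h1, hK]
    calc |coordB u v (s₁ - t_u • u)| ≤ enorm2 (s₁ - t_u • u) / |det2 u v| :=
          abs_coordB_le hd hu1 _
      _ ≤ (η * t_u) / |det2 u v| := by gcongr
      _ = 1 / |det2 u v| * (η * t_u) := by ring
  -- total error bound
  have herr : K * (η * t_u) + K * (η * t_v) ≤ m / 8 := by
    have h1 : t_u + t_v ≤ (a' + b') / 2 := by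
      have := hG₁hi; have := hG₂hi; linarith
    have h2 : K * η * (t_u + t_v) ≤ K * η * ((a' + b') / 2) := by
      apply mul_le_mul_of_nonneg_left h1; positivity
    have h3 : K * η * ((a' + b') / 2) = m / 8 := by
      have hab : a' + b' ≠ 0 := by positivity
      have hK0 : K ≠ 0 := ne_of_gt hKpos
      rw [hη]
      field_simp
      ring
    have h4 : K * (η * t_u) + K * (η * t_v) = K * η * (t_u + t_v) := by ring
    linarith
  have hEtu : 0 ≤ K * (η * t_u) := mul_nonneg hKpos.le (mul_nonneg hηpos.le htu_nn)
  have hEtv : 0 ≤ K * (η * t_v) := mul_nonneg hKpos.le (mul_nonneg hηpos.le htv_nn)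
  have hma : m ≤ a' := min_le_left _ _
  have hmb : m ≤ b' := min_le_right _ _
  refine ⟨G₁ ∪ G₂, ?_, ?_, ?_, ?_, ?_, ?_⟩
  · intro n hn
    rcases Finset.mem_union.mp hn with h | h
    · exact hG₁N n h
    · exact le_trans (le_max_left _ _) (hG₂N n h)
  all_goals
    rw [Finset.sum_union hdisj]
  · rw [coordA_add]
    have h1 := abs_le.mp hA₁
    have h2 := abs_le.mp hA₂
    linarith [htu_lo]
  · rw [coordA_add]
    have h1 := abs_le.mp hA₁
    have h2 := abs_le.mp hA₂
    linarith [hG₁hi]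
  · rw [coordB_add]
    have h1 := abs_le.mp hB₁
    have h2 := abs_le.mp hB₂
    linarith [htv_lo]
  · rw [coordB_add]
    have h1 := abs_le.mp hB₁
    have h2 := abs_le.mp hB₂
    linarith [hG₂hi]
  · have := hG₁hi; have := hG₂hi; linarith

lemma exists_chain {P : ℕ → Finset ℕ → Prop} (h0 : P 0 ∅)
    (hstep : ∀ k F, P k F → ∃ F', F ⊆ F' ∧ P (k + 1) F') :
    ∃ g : ℕ → Finset ℕ, g 0 = ∅ ∧ (∀ k, P k (g k)) ∧ ∀ k, g k ⊆ g (k + 1) := by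
  let f : ∀ k : ℕ, {F : Finset ℕ // P k F} :=
    fun k => Nat.rec ⟨∅, h0⟩
      (fun k ih => ⟨(hstep k ih.1 ih.2).choose, (hstep k ih.1 ih.2).choose_spec.2⟩) k
  exact ⟨fun k => (f k).1, rfl, fun k => (f k).2,
    fun k => (hstep k (f k).1 (f k).2).choose_spec.1⟩

theorem stmt_6' (x : ℕ → ℝ × ℝ) (hcc : (∃ s, Tendsto (fun N => ∑ n ∈ Finset.range N, x n) atTop (𝓝 s)))
    (u v : ℝ × ℝ)
    (hu1 : enorm2 u = 1)
    (hLu : ∀ ε : ℝ, 0 < ε → ¬ Summable (fun n =>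
      if (1 - ε) * enorm2 u * enorm2 (x n) ≤ dot2 u (x n) then enorm2 (x n) else 0))
    (hv1 : enorm2 v = 1)
    (hLv : ∀ ε : ℝ, 0 < ε → ¬ Summable (fun n =>
      if (1 - ε) * enorm2 v * enorm2 (x n) ≤ dot2 v (x n) then enorm2 (x n) else 0))
    (hnc : ∀ c : ℝ, v ≠ c • u) :
    ∀ a b : ℝ, 0 < a → 0 < b →
      ∃ E : Set ℕ, Summable (fun n => enorm2 (Set.indicator E x n)) ∧
        HasSum (Set.indicator E x) (a • u + b • v) := by
  intro a b ha hb
  classical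
  obtain ⟨s, hs⟩ := hcc
  have hd : det2 u v ≠ 0 := det2_ne_zero hu1 hnc
  have h0 : Tendsto x atTop (𝓝 0) := terms_tendsto_zero hs
  set T : ℝ × ℝ := a • u + b • v with hT
  have hTA : coordA u v T = a := by
    rw [hT, coordA_add, coordA_smul, coordA_smul, coordA_u hd, coordA_v]; ring
  have hTB : coordB u v T = b := by
    rw [hT, coordB_add, coordB_smul, coordB_smul, coordB_u, coordB_v hd]; ring
  set P : ℕ → Finset ℕ → Prop := fun k F =>
    0 < coordA u v (T - ∑ n ∈ F, x n) ∧
    coordA u v (T - ∑ n ∈ F, x n) ≤ (7/8 : ℝ)^k * a ∧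
    0 < coordB u v (T - ∑ n ∈ F, x n) ∧
    coordB u v (T - ∑ n ∈ F, x n) ≤ (7/8 : ℝ)^k * b ∧
    (∑ n ∈ F, enorm2 (x n)) ≤ 4 * (a + b) * (1 - (7/8 : ℝ)^k) with hP
  have hbase : P 0 ∅ := by
    rw [hP]
    simp only [Finset.sum_empty, sub_zero, pow_zero, one_mul, hTA, hTB]
    exact ⟨ha, le_refl a, hb, le_refl b, by norm_num⟩
  have hstepP : ∀ k F, P k F → ∃ F', F ⊆ F' ∧ P (k + 1) F' := by
    intro k F hF
    obtain ⟨hA0, hA1, hB0, hB1, hnorm⟩ := hF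
    obtain ⟨G, hGN, hGA0, hGA1, hGB0, hGB1, hGnorm⟩ :=
      step_exists hu1 hv1 hd hLu hLv h0 (F.sup id + 1) hA0 hB0
    have hdisj : Disjoint F G := by
      rw [Finset.disjoint_left]
      intro n hnF hnG
      have h1 : n ≤ F.sup id := Finset.le_sup (f := id) hnF
      have h2 := hGN n hnG
      omega
    refine ⟨F ∪ G, Finset.subset_union_left, ?_⟩
    have hsplit : T - ∑ n ∈ F ∪ G, x n = (T - ∑ n ∈ F, x n) - ∑ n ∈ G, x n := by
      rw [Finset.sum_union hdisj]; abel
    have hAnew : coordA u v (T - ∑ n ∈ F ∪ G, x n)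
        = coordA u v (T - ∑ n ∈ F, x n) - coordA u v (∑ n ∈ G, x n) := by
      rw [hsplit, coordA_sub]
    have hBnew : coordB u v (T - ∑ n ∈ F ∪ G, x n)
        = coordB u v (T - ∑ n ∈ F, x n) - coordB u v (∑ n ∈ G, x n) := by
      rw [hsplit, coordB_sub]
    have hnormnew : ∑ n ∈ F ∪ G, enorm2 (x n)
        = (∑ n ∈ F, enorm2 (x n)) + ∑ n ∈ G, enorm2 (x n) := Finset.sum_union hdisj
    have hps : ((7:ℝ)/8)^(k+1) = (7/8 : ℝ)^k * (7/8) := pow_succ _ _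
    refine ⟨?_, ?_, ?_, ?_, ?_⟩
    · rw [hAnew]; linarith
    · rw [hAnew, hps]; linarith
    · rw [hBnew]; linarith
    · rw [hBnew, hps]; linarith
    · rw [hnormnew, hps]; linarith
  obtain ⟨g, hg0, hgP, hgmono⟩ := exists_chain hbase hstepP
  have hmono : Monotone g := monotone_nat_of_le_succ
    (fun k => Finset.le_iff_subset.mpr (hgmono k))
  set E : Set ℕ := ⋃ k, ↑(g k) with hE
  set f := Set.indicator E x with hf
  have hmemE : ∀ k, ∀ n ∈ g k, n ∈ E := by
    intro k n hn
    rw [hE]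
    exact Set.mem_iUnion.mpr ⟨k, Finset.mem_coe.mpr hn⟩
  have hfg : ∀ k, ∑ n ∈ g k, f n = ∑ n ∈ g k, x n := by
    intro k
    apply Finset.sum_congr rfl
    intro n hn
    exact Set.indicator_of_mem (hmemE k n hn) x
  have hcap : ∀ H : Finset ℕ, (∀ n ∈ H, n ∈ E) → ∃ k, H ⊆ g k := by
    intro H
    induction H using Finset.induction_on with
    | empty => exact fun _ => ⟨0, Finset.empty_subset _⟩
    | @insert n H hn ih =>
      intro hsub
      obtain ⟨k₁, hk₁⟩ := ih (fun i hi => hsub i (Finset.mem_insert_of_mem hi))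
      have hnE : n ∈ E := hsub n (Finset.mem_insert_self _ _)
      rw [hE] at hnE
      obtain ⟨k₂, hk₂⟩ := Set.mem_iUnion.mp hnE
      refine ⟨max k₁ k₂, Finset.insert_subset ?_ ?_⟩
      · exact hmono (le_max_right k₁ k₂) (Finset.mem_coe.mp hk₂)
      · exact hk₁.trans (hmono (le_max_left k₁ k₂))
  have hwsum : Summable (fun n => enorm2 (f n)) := by
    apply summable_of_sum_range_le (c := 4 * (a + b)) (fun n => enorm2_nonneg _)
    intro M
    set H := (Finset.range M).filter (fun i => i ∈ E) with hH
    have h1 : ∑ i ∈ Finset.range M, enorm2 (f i) = ∑ i ∈ H, enorm2 (x i) := by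
      rw [hH, Finset.sum_filter]
      apply Finset.sum_congr rfl
      intro i _
      by_cases h : i ∈ E
      · simp [hf, h, Set.indicator_of_mem]
      · simp [hf, h, Set.indicator_of_notMem, enorm2_zero]
    obtain ⟨k, hk⟩ := hcap H (fun i hi => (Finset.mem_filter.mp hi).2)
    have h2 : ∑ i ∈ H, enorm2 (x i) ≤ ∑ i ∈ g k, enorm2 (x i) :=
      Finset.sum_le_sum_of_subset_of_nonneg hk (fun i _ _ => enorm2_nonneg _)
    have h3 := (hgP k).2.2.2.2
    have hp0 : (0:ℝ) ≤ (7/8 : ℝ)^k := by positivity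
    have hab : (0:ℝ) < a + b := by linarith
    nlinarith
  have hfsum : Summable f :=
    Summable.of_norm_bounded hwsum (fun n => norm_le_enorm2 _)
  have hS : HasSum f (∑' n, f n) := hfsum.hasSum
  -- partial sums along the chain tend to T
  have hTd : Tendsto (fun k => ∑ n ∈ g k, f n) atTop (𝓝 T) := by
    rw [tendsto_iff_norm_sub_tendsto_zero]
    apply squeeze_zero (fun k => norm_nonneg _) (g := fun k => (7/8 : ℝ)^k * (a + b))
    · intro k
      have h1 : (∑ n ∈ g k, f n) - T = -(T - ∑ n ∈ g k, x n) := by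
        rw [hfg k]; abel
      rw [h1, norm_neg]
      obtain ⟨hA0, hA1, hB0, hB1, _⟩ := hgP k
      calc ‖T - ∑ n ∈ g k, x n‖ ≤ enorm2 (T - ∑ n ∈ g k, x n) := norm_le_enorm2 _
        _ ≤ |coordA u v (T - ∑ n ∈ g k, x n)| + |coordB u v (T - ∑ n ∈ g k, x n)| :=
            enorm2_le_coords hd hu1 hv1 _
        _ ≤ (7/8 : ℝ)^k * a + (7/8 : ℝ)^k * b := by
            rw [abs_of_pos hA0, abs_of_pos hB0]; linarith
        _ = (7/8 : ℝ)^k * (a + b) := by ring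
    · have := (tendsto_pow_atTop_nhds_zero_of_lt_one (by norm_num : (0:ℝ) ≤ 7/8)
        (by norm_num : (7:ℝ)/8 < 1)).mul_const (a + b)
      simpa using this
  -- partial sums along the chain tend to the tsum
  have hTd2 : Tendsto (fun k => ∑ n ∈ g k, f n) atTop (𝓝 (∑' n, f n)) := by
    rw [Filter.tendsto_def]
    intro U hU
    have hev : ∀ᶠ H in (atTop : Filter (Finset ℕ)), (∑ n ∈ H, f n) ∈ U :=
      hS hU
    obtain ⟨H₀, hH₀⟩ := Filter.eventually_atTop.mp hev
    obtain ⟨j, hj⟩ := hcap (H₀.filter (fun i => i ∈ E))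
      (fun i hi => (Finset.mem_filter.mp hi).2)
    rw [Filter.mem_atTop_sets]
    refine ⟨j, fun k hk => ?_⟩
    have h1 : (∑ n ∈ g k ∪ H₀, f n) ∈ U :=
      hH₀ (g k ∪ H₀) (Finset.le_iff_subset.mpr Finset.subset_union_right)
    have h2 : ∑ n ∈ g k ∪ H₀, f n = ∑ n ∈ g k, f n := by
      rw [← Finset.union_sdiff_self_eq_union, Finset.sum_union Finset.sdiff_disjoint.symm]
      · have h3 : ∑ n ∈ H₀ \ g k, f n = 0 := by
          apply Finset.sum_eq_zero
          intro n hn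
          obtain ⟨hnH₀, hngk⟩ := Finset.mem_sdiff.mp hn
          have hnE : n ∉ E := by
            intro hnE
            have : n ∈ H₀.filter (fun i => i ∈ E) := Finset.mem_filter.mpr ⟨hnH₀, hnE⟩
            exact hngk (hmono hk (hj this))
          exact Set.indicator_of_notMem hnE x
        rw [h3, add_zero]
    rw [Set.mem_preimage]
    rwa [h2] at h1
  have hval : T = ∑' n, f n := tendsto_nhds_unique hTd hTd2
  exact ⟨E, hwsum, hval ▸ hS⟩

theorem stmt_6 (x : ℕ → ℝ × ℝ) (hcc : CondConv x) (u v : ℝ × ℝ)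
    (hu : IsLevy x u) (hv : IsLevy x v) (hnc : ∀ c : ℝ, v ≠ c • u) :
    ∀ a b : ℝ, 0 < a → 0 < b →
      ∃ E : Set ℕ, Summable (fun n => enorm2 (Set.indicator E x n)) ∧
        HasSum (Set.indicator E x) (a • u + b • v) := by 
  have hd' := hcc
  obtain ⟨hu1, hLu⟩ := hu
  obtain ⟨hv1, hLv⟩ := hv
  obtain ⟨⟨s, hs⟩, -⟩ := hcc
  exact stmt_6' x ⟨s, hs⟩ u v hu1 hLu hv1 hLv hnc
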